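/- The unique algebra morphism φ: H_R → K[x] satisfying φ ∘ B₊ = ∫₀ ∘ φ, where ∫₀ maps a polynomial to its antiderivative vanishing at 0, sends every rooted forest f to x^{|f|}/f!, where |f| is the number of nodes and f! is the tree factorial. -/

import Mathlib

/-- Planar rooted trees. -/
inductive RTree : Type where
  | node : List RTree → RTree

mutual
/-- Number of nodes of a tree. -/
def tsize : RTree → ℕ
  | .node l => 1 + fsize l
/-- Number of nodes of a forest. -/
def fsize : List RTree → ℕ
  | [] => 0
  | t :: ts => tsize t + fsize ts
end

mutual
/-- The tree factorial `t! = Π_{v ∈ V(t)} |t_v|`. -/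
def tfact : RTree → ℕ
  | .node l => (1 + fsize l) * ffact l
/-- The tree factorial of a forest (product over its trees). -/
def ffact : List RTree → ℕ
  | [] => 1
  | t :: ts => tfact t * ffact ts
end

open TensorProduct Polynomial

variable (K : Type) [Field K] [CharZero K]

/-- The algebra of rooted trees: the monoid algebra on the free monoid of
rooted trees (with basis the rooted forests). -/
abbrev HTrees := MonoidAlgebra K (FreeMonoid RTree)

/-- The basis element of `HTrees` corresponding to a forest. -/
noncomputable def forestBasis (f : List RTree) : HTrees K :=
  MonoidAlgebra.single (FreeMonoid.ofList f) 1

/-- The grafting operator `B₊`. -/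
noncomputable def Bplus : HTrees K →ₗ[K] HTrees K :=
  MonoidAlgebra.mapDomainLinearMap K K
    (fun f : FreeMonoid RTree => FreeMonoid.of (RTree.node (FreeMonoid.toList f)))

lemma forestBasis_nil : forestBasis K [] = 1 := rfl

lemma forestBasis_cons (t : RTree) (ts : List RTree) :
    forestBasis K (t :: ts) = forestBasis K [t] * forestBasis K ts := by
  simp only [forestBasis, MonoidAlgebra.single_mul_single, one_mul]
  rfl

lemma Bplus_forestBasis (l : List RTree) :
    Bplus K (forestBasis K l) = forestBasis K [RTree.node l] := by
  rw [forestBasis, forestBasis]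
  unfold Bplus
  rw [MonoidAlgebra.mapDomainLinearMap_single]
  rfl

mutual
theorem tfact_pos (t : RTree) : 0 < tfact t := by
  match t with
  | .node l => exact Nat.mul_pos (by omega) (ffact_pos l)
theorem ffact_pos (f : List RTree) : 0 < ffact f := by
  match f with
  | [] => exact Nat.one_pos
  | t :: ts => exact Nat.mul_pos (tfact_pos t) (ffact_pos ts)
end

mutual
theorem aux_tree (I : K[X] →ₗ[K] K[X])
    (hI : ∀ n : ℕ, I (X ^ n) = C (((n : K) + 1)⁻¹) * X ^ (n + 1))
    (φ : HTrees K →ₐ[K] K[X])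
    (hφ : ∀ h : HTrees K, φ (Bplus K h) = I (φ h)) (t : RTree) :
    φ (forestBasis K [t]) = C ((tfact t : K)⁻¹) * X ^ (tsize t) := by
  match t with
  | .node l =>
    rw [← Bplus_forestBasis, hφ, aux_forest I hI φ hφ l]
    rw [show (C ((ffact l : K)⁻¹) * X ^ fsize l) = ((ffact l : K)⁻¹) • (X ^ fsize l) by
      rw [smul_eq_C_mul], map_smul, hI, smul_eq_C_mul, tsize, tfact]
    rw [← mul_assoc, ← C_mul, ← mul_inv]
    push_cast
    ring_nf
theorem aux_forest (I : K[X] →ₗ[K] K[X])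
    (hI : ∀ n : ℕ, I (X ^ n) = C (((n : K) + 1)⁻¹) * X ^ (n + 1))
    (φ : HTrees K →ₐ[K] K[X])
    (hφ : ∀ h : HTrees K, φ (Bplus K h) = I (φ h)) (f : List RTree) :
    φ (forestBasis K f) = C ((ffact f : K)⁻¹) * X ^ (fsize f) := by
  match f with
  | [] => simp [forestBasis_nil, ffact, fsize]
  | t :: ts =>
    rw [forestBasis_cons, map_mul, aux_tree I hI φ hφ t, aux_forest I hI φ hφ ts,
      ffact, fsize, pow_add]
    push_cast
    rw [mul_inv, C_mul]
    ring
end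


/-- the unique algebra morphism `φ : H_R → K[x]` satisfying
`φ ∘ B₊ = ∫₀ ∘ φ`, where `∫₀` is the antiderivative vanishing at `0`
(the linear map with `∫₀ xⁿ = xⁿ⁺¹/(n+1)`), sends every rooted forest `f` to
`x^{|f|}/f!`. -/
theorem tree_feynman_rule_eq_tree_factorial
    (I : K[X] →ₗ[K] K[X])
    (hI : ∀ n : ℕ, I (X ^ n) = C (((n : K) + 1)⁻¹) * X ^ (n + 1))
    (φ : HTrees K →ₐ[K] K[X])
    (hφ : ∀ h : HTrees K, φ (Bplus K h) = I (φ h)) :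
    ∀ f : List RTree,
      φ (forestBasis K f) = C ((ffact f : K)⁻¹) * X ^ (fsize f) := by
  exact aux_forest K I hI φ hφ
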